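/- Let 𝔪 be an infinite cardinal and let X be a dyadic compact space such that the character χ(x, X) > 𝔪 at every point x ∈ X. Then X is a strictly a_𝔪-space. -/

import Mathlib

open Cardinal Topology

universe u

/-- A Hausdorff space is *subcompact* if it admits a condensation (continuous bijection)
onto a compact Hausdorff space. -/
def Subcompact (X : Type u) [TopologicalSpace X] : Prop :=
  ∃ (Y : Type u) (_ : TopologicalSpace Y), CompactSpace Y ∧ T2Space Y ∧
    ∃ f : X → Y, Continuous f ∧ Function.Bijective f

/-- A compact Hausdorff space `X` is an `a_τ`-space if for every `C ⊆ X` with `#C ≤ τ`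
there is a condensation from the subspace `X \ C` onto a compact Hausdorff space. -/
def ATauSpace (τ : Cardinal.{u}) (X : Type u) [TopologicalSpace X] : Prop :=
  CompactSpace X ∧ T2Space X ∧ ∀ C : Set X, #C ≤ τ → Subcompact ↥(Cᶜ)

/-- A compact Hausdorff space `X` is a strictly `a_τ`-space if for every `C ⊆ X` with
`#C ≤ τ` there is a condensation from `X \ C` onto a compact Hausdorff space `K`
extending to a continuous map `X → K` (encoded: a continuous `g : X → K` whose
restriction to `X \ C` is bijective). -/
def StrictATauSpace (τ : Cardinal.{u}) (X : Type u) [TopologicalSpace X] : Prop :=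
  CompactSpace X ∧ T2Space X ∧ ∀ C : Set X, #C ≤ τ →
    ∃ (K : Type u) (_ : TopologicalSpace K), CompactSpace K ∧ T2Space K ∧
      ∃ g : X → K, Continuous g ∧ Function.Bijective fun x : ↥(Cᶜ) => g x

/-- A Hausdorff space `X` is `a_τ`-subcompact if for every `C ⊆ X` with `#C ≤ τ` there
is a condensation from `X \ C` onto an `a_τ`-space. -/
def ATauSubcompact (τ : Cardinal.{u}) (X : Type u) [TopologicalSpace X] : Prop :=
  ∀ C : Set X, #C ≤ τ →
    ∃ (Y : Type u) (_ : TopologicalSpace Y), ATauSpace τ Y ∧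
      ∃ f : ↥(Cᶜ) → Y, Continuous f ∧ Function.Bijective f

/-- A Hausdorff space `X` is strictly `a_τ`-subcompact if for every `C ⊆ X` with `#C ≤ τ`
there is a condensation from `X \ C` onto a strictly `a_τ`-space `Y` extending to a
continuous map `X → Y`. -/
def StrictATauSubcompact (τ : Cardinal.{u}) (X : Type u) [TopologicalSpace X] : Prop :=
  ∀ C : Set X, #C ≤ τ →
    ∃ (Y : Type u) (_ : TopologicalSpace Y), StrictATauSpace τ Y ∧
      ∃ g : X → Y, Continuous g ∧ Function.Bijective fun x : ↥(Cᶜ) => g x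

/-- A Hausdorff space `X` is almost strictly `a_τ`-subcompact if for every `C ⊆ X` with
`#C ≤ τ` there is a condensation from `X \ C` onto a compact Hausdorff space `Y`
extending to a continuous map `X → Y`. -/
def AlmostStrictATauSubcompact (τ : Cardinal.{u}) (X : Type u) [TopologicalSpace X] : Prop :=
  ∀ C : Set X, #C ≤ τ →
    ∃ (Y : Type u) (_ : TopologicalSpace Y), CompactSpace Y ∧ T2Space Y ∧
      ∃ g : X → Y, Continuous g ∧ Function.Bijective fun x : ↥(Cᶜ) => g x


attribute [local instance] Classical.propDecidable

/-- Basic box neighborhoods in a Cantor cube. -/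
lemma boxNhd {T : Type u} {A : Set (T → Bool)} {v : T → Bool} (hA : A ∈ nhds v) :
    ∃ I : Finset T, ∀ w, (∀ t ∈ I, w t = v t) → w ∈ A := by
  rw [nhds_pi, Filter.mem_pi] at hA
  obtain ⟨I, hIfin, V, hV, hsub⟩ := hA
  refine ⟨hIfin.toFinset, fun w hw => ?_⟩
  refine hsub fun t ht => ?_
  have h1 : V t ∈ nhds (v t) := hV t
  rw [nhds_discrete, Filter.mem_pure] at h1
  rw [hw t (hIfin.mem_toFinset.2 ht)]; exact h1

lemma unifDep {T : Type u} (h : (T → Bool) → ℝ) (hc : Continuous h) {ε : ℝ} (hε : 0 < ε) :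
    ∃ G : Finset T, ∀ z z' : (T → Bool), (∀ t ∈ G, z t = z' t) → |h z - h z'| < ε := by
  classical
  have hbox : ∀ z : T → Bool, ∃ I : Finset T, ∀ w, (∀ t ∈ I, w t = z t) → |h w - h z| < ε/2 := by
    intro z
    have hmem : h ⁻¹' Metric.ball (h z) (ε/2) ∈ nhds z :=
      hc.continuousAt.preimage_mem_nhds (Metric.ball_mem_nhds _ (by positivity))
    obtain ⟨I, hI⟩ := boxNhd hmem
    exact ⟨I, fun w hw => by simpa [Real.dist_eq] using hI w hw⟩
  choose I hI using hbox
  have hcover : (Set.univ : Set (T → Bool)) ⊆ ⋃ z, {w | ∀ t ∈ I z, w t = z t} := by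
    intro z _
    exact Set.mem_iUnion.2 ⟨z, fun t _ => rfl⟩
  obtain ⟨s, hs⟩ := isCompact_univ.elim_finite_subcover
    (fun z => {w : T → Bool | ∀ t ∈ I z, w t = z t})
    (fun z => by
      show IsOpen {w : T → Bool | ∀ t ∈ I z, w t = z t}
      have : {w : T → Bool | ∀ t ∈ I z, w t = z t} = Set.pi (I z : Set T) (fun t => {z t}) := by
        ext w; simp [Set.mem_pi]
      rw [this]
      exact isOpen_set_pi (I z).finite_toSet (fun t _ => isOpen_discrete _)) hcover
  refine ⟨s.sup I, fun z z' hzz => ?_⟩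
  obtain ⟨z₀, hz₀s, hz₀⟩ := Set.mem_iUnion₂.1 (hs (Set.mem_univ z))
  have hz'mem : ∀ t ∈ I z₀, z' t = z₀ t := by
    intro t ht
    rw [← hzz t (Finset.mem_sup.2 ⟨z₀, hz₀s, ht⟩)]
    exact hz₀ t ht
  have h1 := hI z₀ z hz₀
  have h2 := hI z₀ z' hz'mem
  calc |h z - h z'| ≤ |h z - h z₀| + |h z₀ - h z'| := abs_sub_le _ _ _
    _ < ε/2 + ε/2 := by rw [abs_sub_comm (h z₀)]; exact add_lt_add h1 h2
    _ = ε := by ring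

/-- Countable support for continuous real functions on a Cantor cube. -/
lemma ctblSupp {T : Type u} (h : (T → Bool) → ℝ) (hc : Continuous h) :
    ∃ R : Set T, R.Countable ∧ ∀ z z' : T → Bool, (∀ t ∈ R, z t = z' t) → h z = h z' := by
  have : ∀ n : ℕ, ∃ G : Finset T, ∀ z z' : (T → Bool),
      (∀ t ∈ G, z t = z' t) → |h z - h z'| < 1/(n+1) := fun n =>
    unifDep h hc (by positivity)
  choose G hG using this
  refine ⟨⋃ n, (G n : Set T), Set.countable_iUnion fun n => (G n).countable_toSet, ?_⟩
  intro z z' hzz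
  by_contra hne
  have hpos : 0 < |h z - h z'| := abs_pos.2 (sub_ne_zero.2 hne)
  obtain ⟨n, hn⟩ := exists_nat_one_div_lt hpos
  exact absurd (hG n z z' fun t ht => hzz t (Set.mem_iUnion.2 ⟨n, ht⟩)) (not_lt.2 hn.le)

lemma keyLemma {m : Cardinal.{u}} (hm : ℵ₀ ≤ m)
    {X : Type u} [TopologicalSpace X] [CompactSpace X] [T2Space X]
    {T : Type u} {f : (T → Bool) → X} (hf : Continuous f) (hsurj : Function.Surjective f)
    {c : X}
    (hchar : ∀ bs : Set (Set X),
      ((∀ U ∈ bs, U ∈ nhds c) ∧ ∀ V ∈ nhds c, ∃ U ∈ bs, U ⊆ V) → m < #bs)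
    {S : Set T} (hS : #S ≤ m) {Bad : Set X} (hBad : #Bad ≤ m) (hcBad : c ∈ Bad) :
    ∃ q : (T → Bool) × (T → Bool), f q.1 = c ∧ {t | q.2 t ≠ q.1 t}.Finite ∧
      {t | q.2 t ≠ q.1 t} ∩ S = ∅ ∧ f q.2 ∉ Bad := by
  classical
  by_contra hfail0
  push_neg at hfail0
  have hfail : ∀ u z : T → Bool, f u = c → {t | z t ≠ u t}.Finite →
      {t | z t ≠ u t} ∩ S = ∅ → f z ∈ Bad := fun u z h1 h2 h3 => hfail0 (u, z) h1 h2 h3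
  -- Urysohn functions separating c from each point
  have hphi : ∀ d : X, ∃ φ : X → ℝ, Continuous φ ∧ φ c = 0 ∧ (d ≠ c → φ d = 1) := by
    intro d
    by_cases hd : d = c
    · exact ⟨fun _ => 0, continuous_const, rfl, fun h => absurd hd h⟩
    · obtain ⟨φ, h0, h1, -⟩ := exists_continuous_zero_one_of_isClosed
        (isClosed_singleton (x := c)) (isClosed_singleton (x := d))
        (Set.disjoint_singleton.2 (Ne.symm hd))
      exact ⟨φ, φ.continuous, h0 rfl, fun _ => h1 rfl⟩
  choose φ hφcont hφ0 hφ1 using hphi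
  -- countable supports
  have hsupp : ∀ d : X, ∃ R : Set T, R.Countable ∧
      ∀ z z' : T → Bool, (∀ t ∈ R, z t = z' t) → φ d (f z) = φ d (f z') := fun d =>
    ctblSupp (fun z => φ d (f z)) ((hφcont d).comp hf)
  choose Rd hRdc hRd using hsupp
  set R₀ : Set T := S ∪ ⋃ d : ↥Bad, Rd ↑d with hR₀def
  have hR₀m : #R₀ ≤ m := by
    refine le_trans (Cardinal.mk_union_le _ _) ?_
    have h2 : #(⋃ d : ↥Bad, Rd ↑d) ≤ m := by
      refine le_trans (Cardinal.mk_iUnion_le _) ?_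
      have hsup : ⨆ d : ↥Bad, #(Rd ↑d) ≤ ℵ₀ := by
        rcases isEmpty_or_nonempty ↥Bad with hE | hNE
        · simp [iSup_of_empty]
        · exact ciSup_le' fun d => (hRdc ↑d).le_aleph0
      calc #(↥Bad) * ⨆ d : ↥Bad, #(Rd ↑d) ≤ m * ℵ₀ := mul_le_mul' hBad hsup
        _ ≤ m * m := mul_le_mul' le_rfl hm
        _ = m := Cardinal.mul_eq_self hm
    calc #S + #(⋃ d : ↥Bad, Rd ↑d) ≤ m + m := add_le_add hS h2
      _ = m := Cardinal.add_eq_self hm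
  have hRdsub : ∀ d ∈ Bad, Rd d ⊆ R₀ := by
    intro d hd t ht
    exact Set.mem_union_right _ (Set.mem_iUnion.2 ⟨⟨d, hd⟩, ht⟩)
  -- the cylinder property: the fiber of c is a cylinder over R₀
  have hcyl : ∀ v u : T → Bool, f u = c → (∀ t ∈ R₀, u t = v t) → f v = c := by
    intro v u hu hagree
    by_contra hne
    have hopen : IsOpen {x : X | x ≠ c} := isOpen_compl_singleton
    have hmem : f ⁻¹' {x | x ≠ c} ∈ nhds v := (hopen.preimage hf).mem_nhds hne
    obtain ⟨I, hI⟩ := boxNhd hmem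
    set z' : T → Bool := fun t => if t ∈ I then v t else u t with hz'def
    have hz'v : ∀ t ∈ I, z' t = v t := fun t ht => if_pos ht
    have hz'A : f z' ≠ c := hI z' hz'v
    have hagR : ∀ t ∈ R₀, z' t = u t := by
      intro t ht
      by_cases htI : t ∈ I
      · rw [hz'def]; simp only [htI, if_pos]; exact (hagree t ht).symm
      · exact if_neg htI
    have hdiff : {t | z' t ≠ u t} ⊆ ↑I \ R₀ := by
      intro t ht
      simp only [Set.mem_setOf_eq] at ht
      by_cases htI : t ∈ I
      · exact ⟨htI, fun htR => ht (hagR t htR)⟩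
      · exact absurd (if_neg htI) ht
    have hfin : {t | z' t ≠ u t}.Finite := (I.finite_toSet.diff (t := R₀)).subset hdiff
    have hS0 : {t | z' t ≠ u t} ∩ S = ∅ := by
      ext t
      simp only [Set.mem_inter_iff, Set.mem_empty_iff_false, iff_false, not_and]
      intro ht hts
      exact (hdiff ht).2 (Set.mem_union_left _ hts)
    have hBadz : f z' ∈ Bad := hfail u z' hu hfin hS0
    have heq : φ (f z') (f z') = φ (f z') (f u) :=
      hRd (f z') z' u fun t ht => hagR t (hRdsub _ hBadz ht)
    rw [hu, hφ0] at heq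
    exact one_ne_zero ((hφ1 _ hz'A).symm.trans heq)
  -- now derive a small base at c, contradicting hchar
  have hPcomp : IsCompact (f ⁻¹' {c}) := (isClosed_singleton.preimage hf).isCompact
  set Cyl : List ↥R₀ × List ↥R₀ → Set (T → Bool) :=
    fun i => {z | (∀ t ∈ i.1, z ↑t = true) ∧ (∀ t ∈ i.2, z ↑t = false)} with hCyldef
  have hCylcl : ∀ i, IsClosed (Cyl i) := by
    intro i
    have heq : Cyl i = (⋂ t ∈ i.1, (fun z : T → Bool => z ↑t) ⁻¹' {true}) ∩
        (⋂ t ∈ i.2, (fun z : T → Bool => z ↑t) ⁻¹' {false}) := by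
      ext z; simp [hCyldef]
    rw [heq]
    exact IsClosed.inter
      (isClosed_biInter fun t _ => (isClosed_discrete _).preimage (continuous_apply _))
      (isClosed_biInter fun t _ => (isClosed_discrete _).preimage (continuous_apply _))
  set V : List ↥R₀ × List ↥R₀ → Set X := fun i => (f '' Cyl i)ᶜ with hVdef
  have hVopen : ∀ i, IsOpen (V i) :=
    fun i => (((hCylcl i).isCompact).image hf).isClosed.isOpen_compl
  have hWex : ∀ i, ∃ W, W ∈ nhds c ∧ IsClosed W ∧ (c ∈ V i → W ⊆ V i) := by
    intro i
    by_cases hci : c ∈ V i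
    · obtain ⟨W, hW1, hW2, hW3⟩ := exists_mem_nhds_isClosed_subset ((hVopen i).mem_nhds hci)
      exact ⟨W, hW1, hW2, fun _ => hW3⟩
    · exact ⟨Set.univ, Filter.univ_mem, isClosed_univ, fun h => absurd h hci⟩
  choose W hWn hWcl hWsub using hWex
  have hWsing : ⋂ i, W i ⊆ {c} := by
    intro y hy
    simp only [Set.mem_singleton_iff]
    by_contra hyc
    obtain ⟨v, hv⟩ := hsurj y
    set Z : ↥R₀ → Set (T → Bool) := fun t => (fun u : T → Bool => u ↑t) ⁻¹' {v ↑t} with hZdef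
    have hZmem : ∀ (t : ↥R₀) (u : T → Bool), u ∈ Z t ↔ u ↑t = v ↑t := by
      intro t u; simp [hZdef]
    have hempty : (f ⁻¹' {c}) ∩ ⋂ t : ↥R₀, Z t = ∅ := by
      ext u
      simp only [Set.mem_inter_iff, Set.mem_preimage, Set.mem_singleton_iff, Set.mem_iInter,
        Set.mem_empty_iff_false, iff_false, not_and, not_forall]
      intro hu
      by_contra hall
      push_neg at hall
      replace hall : ∀ t : ↥R₀, u ↑t = v ↑t := fun t => (hZmem t u).1 (hall t)
      have hvc : f v = c := hcyl v u hu fun t ht => hall ⟨t, ht⟩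
      exact hyc (by rw [← hv, hvc])
    obtain ⟨s, hs⟩ := hPcomp.elim_finite_subfamily_closed Z
      (fun t : ↥R₀ => (isClosed_discrete ({v ↑t} : Set Bool)).preimage (continuous_apply (↑t : T)))
      hempty
    set l₁ : List ↥R₀ := (s.filter (fun t : ↥R₀ => v ↑t = true)).toList with hl₁def
    set l₂ : List ↥R₀ := (s.filter (fun t : ↥R₀ => v ↑t = false)).toList with hl₂def
    have hyV : y ∉ V (l₁, l₂) := by
      simp only [hVdef, Set.mem_compl_iff, not_not]
      refine ⟨v, ⟨?_, ?_⟩, hv⟩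
      · intro t ht
        exact (Finset.mem_filter.1 (Finset.mem_toList.1 ht)).2
      · intro t ht
        exact (Finset.mem_filter.1 (Finset.mem_toList.1 ht)).2
    have hcV : c ∈ V (l₁, l₂) := by
      simp only [hVdef, Set.mem_compl_iff]
      rintro ⟨z, ⟨hz1, hz2⟩, hzc⟩
      have hzmem : z ∈ (f ⁻¹' {c}) ∩ ⋂ t ∈ s, Z t := by
        refine ⟨hzc, Set.mem_iInter₂.2 fun t ht => (hZmem t z).2 ?_⟩
        rcases Bool.eq_false_or_eq_true (v ↑t) with hvt | hvt
        · exact (hz1 t (Finset.mem_toList.2 (Finset.mem_filter.2 ⟨Finset.mem_coe.1 ht, hvt⟩))).trans hvt.symm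
        · exact (hz2 t (Finset.mem_toList.2 (Finset.mem_filter.2 ⟨Finset.mem_coe.1 ht, hvt⟩))).trans hvt.symm
      rw [hs] at hzmem
      exact hzmem
    exact hyV (hWsub _ hcV (Set.mem_iInter.1 hy (l₁, l₂)))
  set bigW : List (List ↥R₀ × List ↥R₀) → Set X := fun L => ⋂ i ∈ L, W i with hbigWdef
  set bs : Set (Set X) := Set.range bigW with hbsdef
  have h1 : ∀ U ∈ bs, U ∈ nhds c := by
    rintro U ⟨L, rfl⟩
    exact (Filter.biInter_mem L.finite_toSet).2 fun i _ => hWn i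
  have h2 : ∀ Vn ∈ nhds c, ∃ U ∈ bs, U ⊆ Vn := by
    intro Vn hVn
    have hco : c ∈ interior Vn := mem_interior_iff_mem_nhds.2 hVn
    have hK : IsCompact (interior Vn)ᶜ := isOpen_interior.isClosed_compl.isCompact
    have hem : (interior Vn)ᶜ ∩ ⋂ i, W i = ∅ := by
      ext y
      simp only [Set.mem_inter_iff, Set.mem_compl_iff, Set.mem_empty_iff_false, iff_false,
        not_and]
      intro hyc hyW
      exact hyc (hWsing hyW ▸ hco)
    obtain ⟨s', hs'⟩ := hK.elim_finite_subfamily_closed W hWcl hem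
    refine ⟨bigW s'.toList, ⟨s'.toList, rfl⟩, fun x hx => ?_⟩
    have hx' : x ∈ ⋂ i ∈ s', W i :=
      Set.mem_iInter₂.2 fun i hi => Set.mem_iInter₂.1 hx i (Finset.mem_toList.2 hi)
    have : x ∉ (interior Vn)ᶜ := fun hxc => (Set.eq_empty_iff_forall_notMem.1 hs' x ⟨hxc, hx'⟩)
    exact interior_subset (not_not.1 this)
  have hlt := hchar bs ⟨h1, h2⟩
  have hle : #bs ≤ m := by
    have hl : #(List ↥R₀) ≤ m := le_trans (Cardinal.mk_list_le_max _) (max_le hm hR₀m)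
    have hprod : #(List ↥R₀ × List ↥R₀) ≤ m := by
      rw [Cardinal.mk_prod]
      simp only [Cardinal.lift_id]
      calc #(List ↥R₀) * #(List ↥R₀) ≤ m * m := mul_le_mul' hl hl
        _ = m := Cardinal.mul_eq_self hm
    calc #bs ≤ #(List (List ↥R₀ × List ↥R₀)) := Cardinal.mk_range_le
      _ ≤ max ℵ₀ #(List ↥R₀ × List ↥R₀) := Cardinal.mk_list_le_max _
      _ ≤ m := max_le hm hprod
  exact absurd hlt (not_lt.2 hle)

lemma quotientClosedMap {X : Type u} [TopologicalSpace X] [CompactSpace X] [T2Space X]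
    (s : Setoid X) {Z : Set X} (hZ : IsClosed Z)
    (hcl : IsClosed {q : X × X | s.r q.1 q.2}) :
    IsClosed (Quotient.mk s '' Z) := by
  have hquot : IsQuotientMap (Quotient.mk s) := isQuotientMap_quot_mk
  rw [← hquot.isClosed_preimage]
  have heq : Quotient.mk s ⁻¹' (Quotient.mk s '' Z) =
      Prod.snd '' ({q : X × X | s.r q.1 q.2} ∩ Z ×ˢ Set.univ) := by
    ext z
    simp only [Set.mem_preimage, Set.mem_image, Set.mem_inter_iff, Set.mem_setOf_eq,
      Set.mem_prod, Set.mem_univ, and_true, Prod.exists]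
    constructor
    · rintro ⟨w, hwZ, hw⟩
      exact ⟨w, z, ⟨Quotient.exact hw, hwZ⟩, rfl⟩
    · rintro ⟨a, b, ⟨hab, haZ⟩, rfl⟩
      exact ⟨a, haZ, Quotient.sound hab⟩
  rw [heq]
  exact ((hcl.isCompact.inter_right (hZ.prod isClosed_univ)).image continuous_snd).isClosed

lemma quotientT2 {X : Type u} [TopologicalSpace X] [CompactSpace X] [T2Space X]
    (s : Setoid X) (hcl : IsClosed {q : X × X | s.r q.1 q.2}) :
    T2Space (Quotient s) := by
  constructor
  intro a b hab
  obtain ⟨x, rfl⟩ := Quotient.exists_rep a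
  obtain ⟨y, rfl⟩ := Quotient.exists_rep b
  set Fa : Set X := Quotient.mk s ⁻¹' {Quotient.mk s x} with hFa
  set Fb : Set X := Quotient.mk s ⁻¹' {Quotient.mk s y} with hFb
  have hFacl : IsClosed Fa := by
    have : Fa = (fun z => (x, z)) ⁻¹' {q : X × X | s.r q.1 q.2} := by
      ext z
      simp only [hFa, Set.mem_preimage, Set.mem_singleton_iff, Set.mem_setOf_eq]
      exact ⟨fun h => Quotient.exact h.symm, fun h => (Quotient.sound h).symm⟩
    rw [this]
    exact hcl.preimage (Continuous.prodMk_right x)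
  have hFbcl : IsClosed Fb := by
    have : Fb = (fun z => (y, z)) ⁻¹' {q : X × X | s.r q.1 q.2} := by
      ext z
      simp only [hFb, Set.mem_preimage, Set.mem_singleton_iff, Set.mem_setOf_eq]
      exact ⟨fun h => Quotient.exact h.symm, fun h => (Quotient.sound h).symm⟩
    rw [this]
    exact hcl.preimage (Continuous.prodMk_right y)
  have hdisj : Disjoint Fa Fb := by
    rw [Set.disjoint_iff]
    rintro z ⟨hz1, hz2⟩
    simp only [hFa, hFb, Set.mem_preimage, Set.mem_singleton_iff] at hz1 hz2
    exact hab (hz1 ▸ hz2 ▸ rfl)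
  obtain ⟨U, V, hUo, hVo, hFaU, hFbV, hUV⟩ := NormalSpace.normal Fa Fb hFacl hFbcl hdisj
  refine ⟨(Quotient.mk s '' Uᶜ)ᶜ, (Quotient.mk s '' Vᶜ)ᶜ, ?_, ?_, ?_, ?_, ?_⟩
  · exact (quotientClosedMap s hUo.isClosed_compl hcl).isOpen_compl
  · exact (quotientClosedMap s hVo.isClosed_compl hcl).isOpen_compl
  · intro hmem
    obtain ⟨w, hwU, hw⟩ := hmem
    exact hwU (hFaU (show w ∈ Fa by simp [hFa, hw]))
  · intro hmem
    obtain ⟨w, hwV, hw⟩ := hmem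
    exact hwV (hFbV (show w ∈ Fb by simp [hFb, hw]))
  · rw [Set.disjoint_iff]
    rintro q ⟨hq1, hq2⟩
    obtain ⟨z, rfl⟩ := Quotient.exists_rep q
    by_cases hzU : z ∈ U
    · by_cases hzV : z ∈ V
      · exact Set.disjoint_iff.1 hUV ⟨hzU, hzV⟩
      · exact hq2 ⟨z, hzV, rfl⟩
    · exact hq1 ⟨z, hzU, rfl⟩

lemma quotientCompact {X : Type u} [TopologicalSpace X] [CompactSpace X] (s : Setoid X) :
    CompactSpace (Quotient s) := by
  constructor
  have : (Set.univ : Set (Quotient s)) = Quotient.mk s '' Set.univ := by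
    ext q; obtain ⟨z, rfl⟩ := Quotient.exists_rep q; simp
  rw [this]
  exact isCompact_univ.image continuous_quotient_mk'

def diffSet {T : Type u} (q : (T → Bool) × (T → Bool)) : Set T := {t | q.2 t ≠ q.1 t}

def Scur {X T : Type u} (C : Set X) (g : ↥C → (T → Bool) × (T → Bool)) (c : ↥C) : Set T :=
  ⋃ (c' : ↥C), ⋃ (_ : WellOrderingRel c' c), diffSet (g c')

def Badcur {X T : Type u} (f : (T → Bool) → X) (C : Set X)
    (g : ↥C → (T → Bool) × (T → Bool)) (c : ↥C) : Set X :=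
  C ∪ ⋃ (c' : ↥C), ⋃ (_ : WellOrderingRel c' c), {f (g c').2}

lemma Scur_card {m : Cardinal.{u}} (hm : ℵ₀ ≤ m) {X T : Type u} {C : Set X} (hC : #C ≤ m)
    (g : ↥C → (T → Bool) × (T → Bool)) (hg : ∀ c', (diffSet (g c')).Finite) (c : ↥C) :
    #(Scur C g c) ≤ m := by
  refine le_trans (Cardinal.mk_iUnion_le _) ?_
  have hsup : ⨆ c' : ↥C, #(⋃ (_ : WellOrderingRel c' c), diffSet (g c')) ≤ ℵ₀ := by
    rcases isEmpty_or_nonempty ↥C with hE | hNE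
    · simp [iSup_of_empty]
    · refine ciSup_le' fun c' => ?_
      by_cases h : WellOrderingRel c' c
      · refine le_trans ?_ ((hg c').countable.le_aleph0)
        rw [Set.iUnion_eq_if, if_pos h]
      · rw [Set.iUnion_eq_if, if_neg h]
        simp
  calc #(↥C) * ⨆ c' : ↥C, #(⋃ (_ : WellOrderingRel c' c), diffSet (g c')) ≤ m * ℵ₀ :=
        mul_le_mul' hC hsup
    _ ≤ m * m := mul_le_mul' le_rfl hm
    _ = m := Cardinal.mul_eq_self hm

lemma Badcur_card {m : Cardinal.{u}} (hm : ℵ₀ ≤ m) {X T : Type u} {C : Set X} (hC : #C ≤ m)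
    (f : (T → Bool) → X) (g : ↥C → (T → Bool) × (T → Bool)) (c : ↥C) :
    #(Badcur f C g c) ≤ m := by
  refine le_trans (Cardinal.mk_union_le _ _) ?_
  have h2 : #(⋃ (c' : ↥C), ⋃ (_ : WellOrderingRel c' c), {f (g c').2}) ≤ m := by
    refine le_trans (Cardinal.mk_iUnion_le _) ?_
    have hsup : ⨆ c' : ↥C, #(⋃ (_ : WellOrderingRel c' c), ({f (g c').2} : Set X)) ≤ ℵ₀ := by
      rcases isEmpty_or_nonempty ↥C with hE | hNE
      · simp [iSup_of_empty]
      · refine ciSup_le' fun c' => ?_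
        by_cases h : WellOrderingRel c' c
        · rw [Set.iUnion_eq_if, if_pos h]
          simp
        · rw [Set.iUnion_eq_if, if_neg h]
          simp
    calc #(↥C) * _ ≤ m * ℵ₀ := mul_le_mul' hC hsup
      _ ≤ m * m := mul_le_mul' le_rfl hm
      _ = m := Cardinal.mul_eq_self hm
  calc #C + _ ≤ m + m := add_le_add hC h2
    _ = m := Cardinal.add_eq_self hm

noncomputable def recBody {m : Cardinal.{u}} (hm : ℵ₀ ≤ m) {X : Type u} [TopologicalSpace X]
    [CompactSpace X] [T2Space X] {T : Type u} {f : (T → Bool) → X} (hf : Continuous f)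
    (hsurj : Function.Surjective f)
    (hchar : ∀ x : X, ∀ bs : Set (Set X),
      ((∀ U ∈ bs, U ∈ nhds x) ∧ ∀ V ∈ nhds x, ∃ U ∈ bs, U ⊆ V) → m < #bs)
    {C : Set X} (hC : #C ≤ m) (c : ↥C)
    (prev : ∀ c', WellOrderingRel c' c → {q : (T → Bool) × (T → Bool) // (diffSet q).Finite}) :
    {q : (T → Bool) × (T → Bool) // (diffSet q).Finite} :=
  have hg : ∀ c', (diffSet ((fun c' : ↥C =>
      if h : WellOrderingRel c' c then (prev c' h).1
      else ((fun _ => true), (fun _ => true))) c')).Finite := fun c' => by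
    by_cases h : WellOrderingRel c' c
    · simpa [h] using (prev c' h).2
    · simp [h, diffSet]
  have hex := keyLemma hm hf hsurj (hchar ↑c)
    (Scur_card hm hC _ hg c)
    (Badcur_card hm hC f (fun c' : ↥C =>
      if h : WellOrderingRel c' c then (prev c' h).1
      else ((fun _ => true), (fun _ => true))) c)
    (Set.mem_union_left _ c.2)
  ⟨hex.choose, hex.choose_spec.2.1⟩

lemma recBody_spec {m : Cardinal.{u}} (hm : ℵ₀ ≤ m) {X : Type u} [TopologicalSpace X]
    [CompactSpace X] [T2Space X] {T : Type u} {f : (T → Bool) → X} (hf : Continuous f)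
    (hsurj : Function.Surjective f)
    (hchar : ∀ x : X, ∀ bs : Set (Set X),
      ((∀ U ∈ bs, U ∈ nhds x) ∧ ∀ V ∈ nhds x, ∃ U ∈ bs, U ⊆ V) → m < #bs)
    {C : Set X} (hC : #C ≤ m) (c : ↥C)
    (prev : ∀ c', WellOrderingRel c' c → {q : (T → Bool) × (T → Bool) // (diffSet q).Finite}) :
    f (recBody hm hf hsurj hchar hC c prev).1.1 = ↑c ∧
    diffSet (recBody hm hf hsurj hchar hC c prev).1 ∩
      Scur C (fun c' : ↥C =>
        if h : WellOrderingRel c' c then (prev c' h).1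
        else ((fun _ => true), (fun _ => true))) c = ∅ ∧
    f (recBody hm hf hsurj hchar hC c prev).1.2 ∉
      Badcur f C (fun c' : ↥C =>
        if h : WellOrderingRel c' c then (prev c' h).1
        else ((fun _ => true), (fun _ => true))) c := by
  have hg : ∀ c', (diffSet ((fun c' : ↥C =>
      if h : WellOrderingRel c' c then (prev c' h).1
      else ((fun _ => true), (fun _ => true))) c')).Finite := fun c' => by
    by_cases h : WellOrderingRel c' c
    · simpa [h] using (prev c' h).2
    · simp [h, diffSet]
  have hex := keyLemma hm hf hsurj (hchar ↑c)
    (Scur_card hm hC _ hg c)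
    (Badcur_card hm hC f (fun c' : ↥C =>
      if h : WellOrderingRel c' c then (prev c' h).1
      else ((fun _ => true), (fun _ => true))) c)
    (Set.mem_union_left _ c.2)
  exact ⟨hex.choose_spec.1, hex.choose_spec.2.2.1, hex.choose_spec.2.2.2⟩

lemma pairing {m : Cardinal.{u}} (hm : ℵ₀ ≤ m) {X : Type u} [TopologicalSpace X]
    [CompactSpace X] [T2Space X] {T : Type u} {f : (T → Bool) → X} (hf : Continuous f)
    (hsurj : Function.Surjective f)
    (hchar : ∀ x : X, ∀ bs : Set (Set X),
      ((∀ U ∈ bs, U ∈ nhds x) ∧ ∀ V ∈ nhds x, ∃ U ∈ bs, U ⊆ V) → m < #bs)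
    {C : Set X} (hC : #C ≤ m) :
    ∃ UZ : ↥C → (T → Bool) × (T → Bool),
      (∀ c, f (UZ c).1 = ↑c) ∧ (∀ c, (diffSet (UZ c)).Finite) ∧
      (∀ c, diffSet (UZ c) ∩ Scur C UZ c = ∅) ∧
      (∀ c, f (UZ c).2 ∉ Badcur f C UZ c) := by
  have wf : WellFounded (WellOrderingRel : ↥C → ↥C → Prop) := IsWellFounded.wf
  set UZ₀ : ∀ _ : ↥C, {q : (T → Bool) × (T → Bool) // (diffSet q).Finite} :=
    WellFounded.fix wf (recBody hm hf hsurj hchar hC) with hUZ₀def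
  have hfix : ∀ c, UZ₀ c = recBody hm hf hsurj hchar hC c (fun c' _ => UZ₀ c') := fun c => by
    rw [hUZ₀def]
    exact WellFounded.fix_eq wf _ c
  have hgeq : ∀ c : ↥C,
      Scur C (fun c' : ↥C =>
        if h : WellOrderingRel c' c then ((fun c'' _ => UZ₀ c'') c' h).1
        else ((fun _ => true), (fun _ => true))) c = Scur C (fun c' => (UZ₀ c').1) c := by
    intro c
    unfold Scur
    refine Set.iUnion_congr fun c' => Set.iUnion_congr fun h => ?_
    simp only [dif_pos h]
  have hbeq : ∀ c : ↥C,
      Badcur f C (fun c' : ↥C =>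
        if h : WellOrderingRel c' c then ((fun c'' _ => UZ₀ c'') c' h).1
        else ((fun _ => true), (fun _ => true))) c = Badcur f C (fun c' => (UZ₀ c').1) c := by
    intro c
    unfold Badcur
    refine congrArg (C ∪ ·) ?_
    refine Set.iUnion_congr fun c' => Set.iUnion_congr fun h => ?_
    simp only [dif_pos h]
  refine ⟨fun c => (UZ₀ c).1, fun c => ?_, fun c => (UZ₀ c).2, fun c => ?_, fun c => ?_⟩
  · have h := (recBody_spec hm hf hsurj hchar hC c (fun c' _ => UZ₀ c')).1
    show f ((UZ₀ c).1).1 = ↑c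
    rw [hfix c]; exact h
  · have h := (recBody_spec hm hf hsurj hchar hC c (fun c' _ => UZ₀ c')).2.1
    rw [hgeq c] at h
    show diffSet (UZ₀ c).1 ∩ Scur C (fun c' => (UZ₀ c').1) c = ∅
    rw [hfix c]; exact h
  · have h := (recBody_spec hm hf hsurj hchar hC c (fun c' _ => UZ₀ c')).2.2
    rw [hbeq c] at h
    show f ((UZ₀ c).1).2 ∉ Badcur f C (fun c' => (UZ₀ c').1) c
    rw [hfix c]; exact h

/-- a dyadic compact space whose character at every point exceeds `𝔪` is a
strictly `a_𝔪`-space.  (χ(x,X) > 𝔪 is expressed as: every neighborhood base at `x` has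
cardinality greater than `𝔪`.) -/
theorem stmt_15 (m : Cardinal.{u}) (hm : ℵ₀ ≤ m)
    (X : Type u) [TopologicalSpace X] [CompactSpace X] [T2Space X]
    (hdyadic : ∃ (T : Type u) (f : (T → Bool) → X), Continuous f ∧ Function.Surjective f)
    (hchar : ∀ x : X, ∀ bs : Set (Set X),
      ((∀ U ∈ bs, U ∈ nhds x) ∧ ∀ V ∈ nhds x, ∃ U ∈ bs, U ⊆ V) → m < #bs) :
    StrictATauSpace m X := by
  classical
  refine ⟨inferInstance, inferInstance, fun C hC => ?_⟩
  obtain ⟨T, f, hf, hsurj⟩ := hdyadic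
  obtain ⟨UZ, hfu, hfin, hdisj0, hbad0⟩ := pairing hm hf hsurj hchar hC
  set p : ↥C → X := fun c => f (UZ c).2 with hpdef
  have hpnotC : ∀ c, p c ∉ C := fun c hc => hbad0 c (Set.mem_union_left _ hc)
  have hdisj : ∀ c c', c ≠ c' → diffSet (UZ c) ∩ diffSet (UZ c') = ∅ := by
    have key : ∀ a b : ↥C, WellOrderingRel b a → diffSet (UZ a) ∩ diffSet (UZ b) = ∅ := by
      intro a b hr
      have hsubS : diffSet (UZ b) ⊆ Scur C UZ a := fun t ht =>
        Set.mem_iUnion.2 ⟨b, Set.mem_iUnion.2 ⟨hr, ht⟩⟩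
      rw [← Set.subset_empty_iff, ← hdisj0 a]
      exact fun t ht => ⟨ht.1, hsubS ht.2⟩
    intro c c' hne
    rcases trichotomous_of WellOrderingRel c c' with h | h | h
    · rw [Set.inter_comm]; exact key c' c h
    · exact absurd h hne
    · exact key c c' h
  have hpInj : Function.Injective p := by
    have key : ∀ a b : ↥C, WellOrderingRel b a → p a ≠ p b := by
      intro a b hr he
      exact hbad0 a (Set.mem_union_right _
        (Set.mem_iUnion.2 ⟨b, Set.mem_iUnion.2 ⟨hr, he⟩⟩))
    intro c c' hpe
    by_contra hne
    rcases trichotomous_of WellOrderingRel c c' with h | h | h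
    · exact key c' c h hpe.symm
    · exact hne h
    · exact key c c' h hpe
  set rel : X → X → Prop := fun a b =>
    a = b ∨ (∃ c : ↥C, ↑c = a ∧ p c = b) ∨ (∃ c : ↥C, ↑c = b ∧ p c = a) with hreldef
  have hrefl : ∀ a, rel a a := fun a => Or.inl rfl
  have hsymm : ∀ {a b}, rel a b → rel b a := by
    rintro a b (h | h | h)
    · exact Or.inl h.symm
    · exact Or.inr (Or.inr h)
    · exact Or.inr (Or.inl h)
  have htrans : ∀ {a b d}, rel a b → rel b d → rel a d := by
    rintro a b d (rfl | ⟨c₁, rfl, rfl⟩ | ⟨c₁, rfl, rfl⟩) hbd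
    · exact hbd
    · rcases hbd with rfl | ⟨c₂, hc₂, rfl⟩ | ⟨c₂, rfl, hc₂⟩
      · exact Or.inr (Or.inl ⟨c₁, rfl, rfl⟩)
      · exact absurd (hc₂ ▸ c₂.2) (hpnotC c₁)
      · have hcc : c₂ = c₁ := hpInj hc₂
        exact Or.inl (by rw [hcc])
    · rcases hbd with rfl | ⟨c₂, hc₂, rfl⟩ | ⟨c₂, rfl, hc₂⟩
      · exact Or.inr (Or.inr ⟨c₁, rfl, rfl⟩)
      · have hcc : c₂ = c₁ := Subtype.coe_injective hc₂
        exact Or.inl (by rw [hcc])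
      · have hpc : p c₂ ∈ C := by rw [hc₂]; exact c₁.2
        exact absurd hpc (hpnotC c₂)
  have hRcl : IsClosed {q : X × X | rel q.1 q.2} := by
    refine isClosed_of_closure_subset ?_
    rintro ⟨x, y⟩ hxy
    by_cases hxyeq : x = y
    · exact Or.inl hxyeq
    obtain ⟨φ, hφcont, hφx, hφy⟩ : ∃ φ : X → ℝ, Continuous φ ∧ φ x = 0 ∧ φ y = 1 := by
      obtain ⟨φ, h0, h1, -⟩ := exists_continuous_zero_one_of_isClosed
        (isClosed_singleton (x := x)) (isClosed_singleton (x := y))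
        (Set.disjoint_singleton.2 hxyeq)
      exact ⟨φ, φ.continuous, h0 rfl, h1 rfl⟩
    obtain ⟨G, hG⟩ := unifDep (fun w => φ (f w)) (hφcont.comp hf) (ε := 1/2) (by norm_num)
    set N : Set (X × X) := {q | φ q.1 < 1/4 ∧ 3/4 < φ q.2} with hNdef
    have hNopen : IsOpen N := by
      have heq : N = (fun q : X × X => φ q.1) ⁻¹' (Set.Iio (1/4)) ∩
          (fun q : X × X => φ q.2) ⁻¹' (Set.Ioi (3/4)) := rfl
      rw [heq]
      exact ((isOpen_Iio).preimage (hφcont.comp continuous_fst)).inter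
        ((isOpen_Ioi).preimage (hφcont.comp continuous_snd))
    have hNxy : (x, y) ∈ N := ⟨by rw [hφx]; norm_num, by rw [hφy]; norm_num⟩
    set K₀ : Set ↥C := {c | (diffSet (UZ c) ∩ ↑G).Nonempty} with hK₀def
    have hK₀fin : K₀.Finite := by
      have hinj : Function.Injective
          (fun c : ↥K₀ => (⟨(c.2).choose, (c.2).choose_spec.2⟩ : {t // t ∈ G})) := by
        intro c₁ c₂ hcc
        by_contra hne
        have hne' : c₁.1 ≠ c₂.1 := fun h => hne (Subtype.ext h)
        have h1 : (c₁.2).choose ∈ diffSet (UZ c₁.1) := (c₁.2).choose_spec.1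
        have h2 : (c₂.2).choose ∈ diffSet (UZ c₂.1) := (c₂.2).choose_spec.1
        have heq : (c₁.2).choose = (c₂.2).choose := congrArg Subtype.val hcc
        have hmem : (c₁.2).choose ∈ diffSet (UZ c₁.1) ∩ diffSet (UZ c₂.1) := ⟨h1, heq ▸ h2⟩
        rw [hdisj c₁.1 c₂.1 hne'] at hmem
        exact hmem
      haveI : Finite ↥K₀ := Finite.of_injective _ hinj
      exact Set.toFinite K₀
    set FinPairs : Set (X × X) := ((fun c : ↥C => ((↑c : X), p c)) '' K₀) ∪
      ((fun c : ↥C => (p c, (↑c : X))) '' K₀) with hFPdef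
    have hFPfin : FinPairs.Finite := (hK₀fin.image _).union (hK₀fin.image _)
    have hFPsubR : FinPairs ⊆ {q : X × X | rel q.1 q.2} := by
      rintro q (⟨c, _, rfl⟩ | ⟨c, _, rfl⟩)
      · exact Or.inr (Or.inl ⟨c, rfl, rfl⟩)
      · exact Or.inr (Or.inr ⟨c, rfl, rfl⟩)
    have hagree : ∀ c : ↥C, c ∉ K₀ → |φ ↑c - φ (p c)| < 1/2 := by
      intro c hc
      have hag : ∀ t ∈ G, (UZ c).1 t = (UZ c).2 t := by
        intro t ht
        by_contra hne
        exact hc ⟨t, ⟨fun h => hne h.symm, ht⟩⟩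
      have hval := hG (UZ c).1 (UZ c).2 hag
      rw [hfu c] at hval
      exact hval
    have hsubN : {q : X × X | rel q.1 q.2} ∩ N ⊆ FinPairs := by
      rintro ⟨a, b⟩ ⟨hrel, hN1, hN2⟩
      rcases hrel with heq | ⟨c, rfl, rfl⟩ | ⟨c, rfl, rfl⟩
      · rw [heq] at hN1; simp only at hN1 hN2; linarith
      · by_cases hcK : c ∈ K₀
        · exact Or.inl ⟨c, hcK, rfl⟩
        · have habs := hagree c hcK
          rw [abs_sub_lt_iff] at habs
          simp only at hN1 hN2
          linarith [habs.2]
      · by_cases hcK : c ∈ K₀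
        · exact Or.inr ⟨c, hcK, rfl⟩
        · have habs := hagree c hcK
          rw [abs_sub_lt_iff] at habs
          simp only at hN1 hN2
          linarith [habs.1]
    have hmem2 : (x, y) ∈ closure ({q : X × X | rel q.1 q.2} ∩ N) := by
      rw [mem_closure_iff] at hxy ⊢
      intro O hO hxyO
      obtain ⟨w, ⟨hwO, hwN⟩, hwR⟩ := hxy (O ∩ N) (hO.inter hNopen) ⟨hxyO, hNxy⟩
      exact ⟨w, hwO, hwR, hwN⟩
    have hFP : (x, y) ∈ FinPairs := by
      have hcl : IsClosed FinPairs := hFPfin.isClosed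
      have hsub := closure_mono hsubN hmem2
      rwa [hcl.closure_eq] at hsub
    exact hFPsubR hFP
  letI st : Setoid X := ⟨rel, ⟨hrefl, hsymm, htrans⟩⟩
  haveI hT2K : T2Space (Quotient st) := quotientT2 st hRcl
  haveI hCK : CompactSpace (Quotient st) := quotientCompact st
  refine ⟨Quotient st, inferInstance, hCK, hT2K, Quotient.mk st, continuous_quotient_mk', ?_, ?_⟩
  · intro x₁ x₂ h
    have hr : rel ↑x₁ ↑x₂ := Quotient.exact h
    rcases hr with heq | ⟨c, hc1, _⟩ | ⟨c, hc1, _⟩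
    · exact Subtype.ext heq
    · exact absurd (hc1 ▸ c.2) x₁.2
    · exact absurd (hc1 ▸ c.2) x₂.2
  · intro q
    obtain ⟨x, rfl⟩ := Quotient.exists_rep q
    by_cases hx : x ∈ C
    · refine ⟨⟨p ⟨x, hx⟩, hpnotC ⟨x, hx⟩⟩, ?_⟩
      exact Quotient.sound (show rel (p ⟨x, hx⟩) x from Or.inr (Or.inr ⟨⟨x, hx⟩, rfl, rfl⟩))
    · exact ⟨⟨x, hx⟩, rfl⟩
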